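/- Let ℤ₍₂₎ denote the localization of ℤ at the prime ideal generated by 2, and let R = ℤ₍₂₎ × ℤ₍₂₎. The monic polynomial h = t² + (3,1)t + (2,3) ∈ R[t] has no SR-factorization in R[t], but h has a gSRC-factorization in R[t]. -/

import Mathlib

/-- An SR-factorization of a monic polynomial `f` is a factorization `f = f₀ * f₁` into monic
polynomials with `f₀(0)` and `f₁(1)` units. -/
def HasSRFactorization {R : Type*} [CommRing R] (f : Polynomial R) : Prop :=
  ∃ f₀ f₁ : Polynomial R, f₀.Monic ∧ f₁.Monic ∧ f = f₀ * f₁ ∧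
    IsUnit (f₀.eval 0) ∧ IsUnit (f₁.eval 1)

/-- An SRC-factorization is an SR-factorization `f = f₀ * f₁` in which moreover the ideal
`(f₀, f₁)` is all of `R[t]`, i.e. `f₀ * u + f₁ * v = 1` for some `u, v`. -/
def HasSRCFactorization {R : Type*} [CommRing R] (f : Polynomial R) : Prop :=
  ∃ f₀ f₁ : Polynomial R, f₀.Monic ∧ f₁.Monic ∧ f = f₀ * f₁ ∧
    IsUnit (f₀.eval 0) ∧ IsUnit (f₁.eval 1) ∧ ∃ u v : Polynomial R, f₀ * u + f₁ * v = 1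

/-- A complete orthogonal set of idempotents: finitely many idempotents, pairwise orthogonal,
summing to `1`. -/
def IsCompleteOrthogonalIdempotents {R : Type*} [CommRing R] {k : ℕ} (e : Fin k → R) : Prop :=
  (∀ i, IsIdempotentElem (e i)) ∧ (∀ i j, i ≠ j → e i * e j = 0) ∧ ∑ i, e i = 1

/-- A monic `h ∈ R[t]` has a gSRC-factorization if there is a complete orthogonal set of
idempotents `e₁, …, e_k` such that the image of `h` in `(R/(1-eᵢ))[t]` has an SRC-factorization
for each `i`. -/
def HasGSRCFactorization {R : Type*} [CommRing R] (h : Polynomial R) : Prop :=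
  ∃ (k : ℕ) (e : Fin k → R), IsCompleteOrthogonalIdempotents e ∧
    ∀ i, HasSRCFactorization (h.map (Ideal.Quotient.mk (Ideal.span {1 - e i})))

open Polynomial

instance : (Ideal.span {(2 : ℤ)}).IsPrime := by
  rw [Ideal.span_singleton_prime (by norm_num)]
  exact Int.prime_two

/-- `ℤ₍₂₎`, the localization of `ℤ` at the prime ideal `(2)`. -/
abbrev Ztwo : Type := Localization.AtPrime (Ideal.span {(2 : ℤ)})

/-- The canonical map `ℤ₍₂₎ → ℤ/2` obtained from the universal property of localization. -/
noncomputable def phi : Ztwo →+* ZMod 2 :=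
  IsLocalization.lift (M := (Ideal.span {(2:ℤ)}).primeCompl) (S := Ztwo)
    (g := Int.castRingHom (ZMod 2)) (by
      rintro ⟨y, hy⟩
      have hy' : ¬ (2:ℤ) ∣ y := by
        simpa [Ideal.primeCompl, Ideal.mem_span_singleton] using hy
      have : ((y : ℤ) : ZMod 2) ≠ 0 := fun h0 =>
        hy' ((ZMod.intCast_zmod_eq_zero_iff_dvd y 2).mp (by exact_mod_cast h0))
      exact isUnit_iff_ne_zero.mpr this)

lemma not_unit_of_phi (x : Ztwo) (hx : phi x = 0) : ¬ IsUnit x := fun h => by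
  have h2 := h.map phi
  rw [hx] at h2
  exact (isUnit_iff_ne_zero.mp h2) rfl

lemma not2 : ¬ IsUnit (2 : Ztwo) := not_unit_of_phi _ (by rw [map_ofNat]; decide)
lemma not6 : ¬ IsUnit (6 : Ztwo) := not_unit_of_phi _ (by rw [map_ofNat]; decide)

lemma unit_odd (n : ℤ) (hn : ¬ (2:ℤ) ∣ n) : IsUnit (algebraMap ℤ Ztwo n) := by
  have h5 : n ∈ (Ideal.span {(2:ℤ)}).primeCompl := by
    simpa [Ideal.primeCompl, Ideal.mem_span_singleton] using hn
  exact IsLocalization.map_units (M := (Ideal.span {(2:ℤ)}).primeCompl) Ztwo ⟨n, h5⟩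

lemma u3 : IsUnit (3 : Ztwo) := by simpa using unit_odd 3 (by decide)
lemma u5 : IsUnit (5 : Ztwo) := by simpa using unit_odd 5 (by decide)

abbrev Rt := Ztwo × Ztwo

noncomputable abbrev hh : Polynomial Rt :=
  (X : Polynomial Rt) ^ 2 + C ((3 : Ztwo), (1 : Ztwo)) * X + C ((2 : Ztwo), (3 : Ztwo))

theorem no_SR : ¬ HasSRFactorization hh := by
  rintro ⟨f₀, f₁, m0, m1, heq, hu0, hu1⟩
  set h : Polynomial Rt := hh with hdef
  have hdeg : h.natDegree = 2 := by rw [hdef]; unfold hh; compute_degree!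
  have hsum : f₀.natDegree + f₁.natDegree = 2 := by
    rw [← hdeg, heq, m0.natDegree_mul m1]
  have hcases : f₀.natDegree = 0 ∨ (f₀.natDegree = 1 ∧ f₁.natDegree = 1) ∨
      f₁.natDegree = 0 := by omega
  rcases hcases with h0 | ⟨h01, h11⟩ | h10
  · have hf0 : f₀ = 1 := m0.natDegree_eq_zero.mp h0
    rw [hf0, one_mul] at heq
    rw [← heq] at hu1
    have : h.eval 1 = ((6:Ztwo), (5:Ztwo)) := by
      rw [hdef]; unfold hh; simp [Prod.ext_iff]; norm_num
    rw [this] at hu1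
    exact not6 (hu1.map (RingHom.fst _ _))
  · have hf0 : f₀ = X + C (f₀.coeff 0) := m0.eq_X_add_C h01
    have hf1 : f₁ = X + C (f₁.coeff 0) := m1.eq_X_add_C h11
    set a := f₀.coeff 0
    set b := f₁.coeff 0
    rw [hf0, hf1] at heq
    have e : (X + C a) * (X + C b) = X^2 + C (a+b) * X + C (a*b) := by
      rw [C_add, C_mul]; ring
    rw [e, hdef] at heq
    unfold hh at heq
    have hc1 : ((3:Ztwo), (1:Ztwo)) = a + b := by
      simpa using congrArg (fun p => Polynomial.coeff p 1) heq
    have hc0 : ((2:Ztwo), (3:Ztwo)) = a * b := by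
      simpa using congrArg (fun p => Polynomial.coeff p 0) heq
    have hs : (1:Ztwo) = a.2 + b.2 := by
      simpa using congrArg Prod.snd hc1
    have hp : (3:Ztwo) = a.2 * b.2 := by
      simpa using congrArg Prod.snd hc0
    have hs' : (1 : ZMod 2) = phi a.2 + phi b.2 := by
      have := congrArg phi hs; simpa using this
    have hp' : (1 : ZMod 2) = phi a.2 * phi b.2 := by
      have := congrArg phi hp; rw [map_ofNat, show (3 : ZMod 2) = 1 from by decide] at this; simpa using this
    have : ∀ x y : ZMod 2, ¬((1:ZMod 2) = x + y ∧ (1:ZMod 2) = x * y) := by decide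
    exact this _ _ ⟨hs', hp'⟩
  · have hf1 : f₁ = 1 := m1.natDegree_eq_zero.mp h10
    rw [hf1, mul_one] at heq
    rw [← heq] at hu0
    have : h.eval 0 = ((2:Ztwo), (3:Ztwo)) := by rw [hdef]; unfold hh; simp
    rw [this] at hu0
    exact not2 (hu0.map (RingHom.fst _ _))

theorem case0 :
    HasSRCFactorization (hh.map (Ideal.Quotient.mk (Ideal.span {((0:Ztwo),(1:Ztwo))}))) := by
  set I : Ideal Rt := Ideal.span {((0:Ztwo),(1:Ztwo))} with hI
  set q := Ideal.Quotient.mk I with hq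
  have hq10 : q ((1:Ztwo), (0:Ztwo)) = 1 := by
    rw [show (1 : Rt ⧸ I) = q 1 from rfl, Ideal.Quotient.eq]
    rw [hI, Ideal.mem_span_singleton]
    exact ⟨((0:Ztwo), -1), by simp [Prod.ext_iff]⟩
  refine ⟨X + C (q ((1:Ztwo),(0:Ztwo))), X + C (q ((2:Ztwo),(1:Ztwo))),
    monic_X_add_C _, monic_X_add_C _, ?_, ?_, ?_, ?_⟩
  · have e : (X + C (q ((1:Ztwo),(0:Ztwo)))) * (X + C (q ((2:Ztwo),(1:Ztwo)))) =
        X^2 + C (q ((1:Ztwo),(0:Ztwo)) + q ((2:Ztwo),(1:Ztwo))) * X +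
          C (q ((1:Ztwo),(0:Ztwo)) * q ((2:Ztwo),(1:Ztwo))) := by
      rw [C_add, C_mul]; ring
    rw [e, ← map_add, ← map_mul]
    have h1 : ((1:Ztwo),(0:Ztwo)) + ((2:Ztwo),(1:Ztwo)) = ((3:Ztwo),(1:Ztwo)) := by
      simp [Prod.ext_iff]; norm_num
    have h2 : q (((1:Ztwo),(0:Ztwo)) * ((2:Ztwo),(1:Ztwo))) = q ((2:Ztwo),(3:Ztwo)) := by
      rw [Ideal.Quotient.eq, hI, Ideal.mem_span_singleton]
      exact ⟨((0:Ztwo), -3), by simp [Prod.ext_iff]⟩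
    rw [h1, h2]
    simp [hh]
  · simp [hq10]
  · simp only [eval_add, eval_X, eval_C]
    obtain ⟨u, hu⟩ := u3
    refine IsUnit.of_mul_eq_one (q ((↑u⁻¹ : Ztwo), 0)) ?_
    have : (1 : Rt ⧸ I) + q ((2:Ztwo),(1:Ztwo)) = q ((3:Ztwo),(2:Ztwo)) := by
      rw [show (1 : Rt ⧸ I) = q 1 from rfl, ← map_add]
      congr 1
      simp [Prod.ext_iff]; norm_num
    rw [this, ← map_mul]
    have h3 : ((3:Ztwo),(2:Ztwo)) * ((↑u⁻¹ : Ztwo), 0) = ((1:Ztwo), (0:Ztwo)) := by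
      simp only [Prod.mk_mul_mk, Prod.mk.injEq, mul_zero]
      refine ⟨?_, trivial⟩
      rw [← hu]
      exact Units.mul_inv u
    rw [h3, hq10]
  · refine ⟨-1, 1, ?_⟩
    rw [mul_one, mul_neg_one]
    have e1 : (X + C (q ((2:Ztwo),(1:Ztwo)))) + -(X + C (q ((1:Ztwo),(0:Ztwo)))) =
        C (q ((2:Ztwo),(1:Ztwo)) - q ((1:Ztwo),(0:Ztwo))) := by
      rw [C_sub]; ring
    rw [add_comm, e1, ← map_sub]
    have e2 : (((2:Ztwo),(1:Ztwo)) : Rt) - ((1:Ztwo),(0:Ztwo)) = 1 := by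
      simp [Prod.ext_iff]; norm_num
    rw [e2, map_one, map_one]

theorem case1 :
    HasSRCFactorization (hh.map (Ideal.Quotient.mk (Ideal.span {((1:Ztwo),(0:Ztwo))}))) := by
  set I : Ideal Rt := Ideal.span {((1:Ztwo),(0:Ztwo))} with hI
  set q := Ideal.Quotient.mk I with hq
  have hmap : hh.map q = X^2 + C (q ((3:Ztwo),(1:Ztwo))) * X + C (q ((2:Ztwo),(3:Ztwo))) := by
    simp [hh]
  refine ⟨1, hh.map q, monic_one, ?_, (one_mul _).symm, by simp, ?_, 1, 0, by simp⟩
  · refine Polynomial.Monic.map q ?_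
    unfold hh; monicity!
  · rw [hmap]
    simp only [eval_add, eval_mul, eval_pow, eval_X, eval_C, one_pow, mul_one]
    obtain ⟨u, hu⟩ := u5
    refine IsUnit.of_mul_eq_one (q ((0:Ztwo), (↑u⁻¹ : Ztwo))) ?_
    have e1 : (1 : Rt ⧸ I) + q ((3:Ztwo),(1:Ztwo)) + q ((2:Ztwo),(3:Ztwo)) =
        q ((6:Ztwo),(5:Ztwo)) := by
      rw [show (1 : Rt ⧸ I) = q 1 from rfl, ← map_add, ← map_add]
      congr 1
      simp [Prod.ext_iff]; norm_num
    rw [e1, ← map_mul]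
    have h3 : ((6:Ztwo),(5:Ztwo)) * ((0:Ztwo), (↑u⁻¹ : Ztwo)) = ((0:Ztwo), (1:Ztwo)) := by
      simp only [Prod.mk_mul_mk, Prod.mk.injEq, mul_zero]
      refine ⟨trivial, ?_⟩
      rw [← hu]
      exact Units.mul_inv u
    rw [h3]
    rw [show (1 : Rt ⧸ I) = q 1 from rfl, Ideal.Quotient.eq, hI, Ideal.mem_span_singleton]
    exact ⟨((-1:Ztwo), 0), by simp [Prod.ext_iff]⟩

/-- Over `R = ℤ₍₂₎ × ℤ₍₂₎`, the polynomial `t² + (3,1)t + (2,3)` has no SR-factorization,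
but has a gSRC-factorization. -/
theorem example_no_SR_but_gSRC :
    ¬ HasSRFactorization
        ((X : Polynomial (Ztwo × Ztwo)) ^ 2 + C ((3 : Ztwo), (1 : Ztwo)) * X +
          C ((2 : Ztwo), (3 : Ztwo))) ∧
      HasGSRCFactorization
        ((X : Polynomial (Ztwo × Ztwo)) ^ 2 + C ((3 : Ztwo), (1 : Ztwo)) * X +
          C ((2 : Ztwo), (3 : Ztwo))) := by
  constructor
  · exact no_SR
  · refine ⟨2, ![((1:Ztwo),(0:Ztwo)), ((0:Ztwo),(1:Ztwo))], ⟨?_, ?_, ?_⟩, ?_⟩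
    · intro i
      fin_cases i <;> simp [IsIdempotentElem, Prod.ext_iff]
    · intro i j hij
      fin_cases i <;> fin_cases j <;>
        simp_all [Prod.ext_iff]
    · rw [Fin.sum_univ_two]
      simp [Prod.ext_iff]
    · intro i
      fin_cases i
      · have e0 : (Ideal.span {(1:Rt) - ((1:Ztwo),(0:Ztwo))}) =
            Ideal.span {((0:Ztwo),(1:Ztwo))} := by
          congr 1
          simp [Prod.ext_iff]
        show HasSRCFactorization
          (hh.map (Ideal.Quotient.mk (Ideal.span {(1:Rt) - ((1:Ztwo),(0:Ztwo))})))
        rw [e0]; exact case0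
      · have e1 : (Ideal.span {(1:Rt) - ((0:Ztwo),(1:Ztwo))}) =
            Ideal.span {((1:Ztwo),(0:Ztwo))} := by
          congr 1
          simp [Prod.ext_iff]
        show HasSRCFactorization
          (hh.map (Ideal.Quotient.mk (Ideal.span {(1:Rt) - ((0:Ztwo),(1:Ztwo))})))
        rw [e1]; exact case1
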